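/- Let Q = {1,…,t} index a disjunction ⋁_{k∈Q} (A^k x ≥ a^k_0) valid for a set S ⊆ ℝ^J, where A^k has columns a^k_j ∈ ℝ^m and a^k_0 ∈ ℝ^m. Let θ^k ∈ ℝ^m_+ with θ^k·a^k_0 > 0 for all k, and suppose for each k a vector b^k_0 ≤ a^k_0 is known with A^k x ≥ b^k_0 for all x ∈ S. Fix j* ∈ J, suppose x_{j*} ∈ ℤ and x_{j*} ≥ 0 for all x ∈ S, and all other coordinates x_j ≥ 0. Let M = {m ∈ ℤ^t : Σ_k m^k ≥ 0}. Then for any m ∈ M the inequality Σ_{j≠j*} α_j x_j + ᾱ_{j*} x_{j*} ≥ 1 is valid for S, where α_j = max_k θ^k·a^k_j / θ^k·a^k_0 and ᾱ_{j*} = max_k (θ^k·a^k_{j*} + m^k · θ^k·(a^k_0 − b^k_0)) / θ^k·a^k_0. -/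

import Mathlib

/-- Monoidal cut strengthening (Balas–Jeroslow, Theorem 8.1). -/
theorem monoidal_strengthening (n m t : ℕ)
    (S : Set (Fin n → ℝ)) (jstar : Fin n)
    (A : Fin (t + 1) → Fin n → Fin m → ℝ) (a0 : Fin (t + 1) → Fin m → ℝ)
    (θ : Fin (t + 1) → Fin m → ℝ) (hθ : ∀ k i, 0 ≤ θ k i)
    (hθa0 : ∀ k, 0 < ∑ i, θ k i * a0 k i)
    (b0 : Fin (t + 1) → Fin m → ℝ) (hb0 : ∀ k i, b0 k i ≤ a0 k i)
    (hlb : ∀ x ∈ S, ∀ k i, b0 k i ≤ ∑ j, A k j i * x j)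
    (hdisj : ∀ x ∈ S, ∃ k, ∀ i, a0 k i ≤ ∑ j, A k j i * x j)
    (hxnn : ∀ x ∈ S, ∀ j, 0 ≤ x j)
    (hxint : ∀ x ∈ S, ∃ z : ℤ, x jstar = (z : ℝ))
    (mv : Fin (t + 1) → ℤ) (hmv : 0 ≤ ∑ k, mv k) :
    ∀ x ∈ S,
      1 ≤ (∑ j ∈ Finset.univ.erase jstar,
            (Finset.univ.sup' Finset.univ_nonempty
              (fun k => (∑ i, θ k i * A k j i) / (∑ i, θ k i * a0 k i))) * x j) +
          (Finset.univ.sup' Finset.univ_nonempty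
            (fun k => ((∑ i, θ k i * A k jstar i) +
                (mv k : ℝ) * (∑ i, θ k i * (a0 k i - b0 k i))) /
              (∑ i, θ k i * a0 k i))) * x jstar := by
  intro x hx
  obtain ⟨z, hz⟩ := hxint x hx
  have hp0 : 0 ≤ x jstar := hxnn x hx jstar
  -- Key claim: some shifted disjunct is satisfied componentwise.
  have key : ∃ k, ∀ i, a0 k i ≤ (∑ j, A k j i * x j)
      + (mv k : ℝ) * x jstar * (a0 k i - b0 k i) := by
    obtain ⟨k0, hk0⟩ := hdisj x hx
    by_cases hz0 : x jstar = 0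
    · refine ⟨k0, fun i => ?_⟩
      rw [hz0]
      simpa using hk0 i
    · have hp1 : 1 ≤ x jstar := by
        have hz1 : 1 ≤ z := by
          have h0 : (0:ℝ) ≤ (z:ℝ) := hz ▸ hp0
          have h0' : 0 ≤ z := by exact_mod_cast h0
          have : z ≠ 0 := by
            rintro rfl
            exact hz0 (by simpa using hz)
          omega
        calc (1:ℝ) ≤ (z:ℝ) := by exact_mod_cast hz1
          _ = x jstar := hz.symm
      by_cases hm : 0 ≤ mv k0
      · refine ⟨k0, fun i => ?_⟩
        have h1 := hk0 i
        have h2 := hb0 k0 i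
        have hm' : (0:ℝ) ≤ (mv k0 : ℝ) := by exact_mod_cast hm
        have h3 : 0 ≤ (mv k0 : ℝ) * x jstar * (a0 k0 i - b0 k0 i) :=
          mul_nonneg (mul_nonneg hm' hp0) (by linarith)
        linarith
      · push_neg at hm
        have hex : ∃ k1, 1 ≤ mv k1 := by
          by_contra h
          push_neg at h
          have hs : ∑ k, mv k < ∑ _k : Fin (t+1), (0:ℤ) :=
            Finset.sum_lt_sum (fun k _ => by have := h k; omega)
              ⟨k0, Finset.mem_univ _, by omega⟩
          simp at hs
          omega
        obtain ⟨k1, hk1⟩ := hex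
        refine ⟨k1, fun i => ?_⟩
        have h1 := hlb x hx k1 i
        have h2 := hb0 k1 i
        have hm' : (1:ℝ) ≤ (mv k1 : ℝ) := by exact_mod_cast hk1
        have hmp : (1:ℝ) ≤ (mv k1 : ℝ) * x jstar := one_le_mul_of_one_le_of_one_le hm' hp1
        have h3 : a0 k1 i - b0 k1 i ≤ (mv k1 : ℝ) * x jstar * (a0 k1 i - b0 k1 i) :=
          le_mul_of_one_le_left (by linarith) hmp
        linarith
  obtain ⟨k, hk⟩ := key
  have hDk : 0 < ∑ i, θ k i * a0 k i := hθa0 k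
  -- Aggregate with multipliers θ k.
  have agg : (∑ i, θ k i * a0 k i) ≤ (∑ j, (∑ i, θ k i * A k j i) * x j) +
      ((mv k : ℝ) * (∑ i, θ k i * (a0 k i - b0 k i))) * x jstar := by
    have h1 : (∑ i, θ k i * a0 k i) ≤
        ∑ i, θ k i * ((∑ j, A k j i * x j) + (mv k : ℝ) * x jstar * (a0 k i - b0 k i)) :=
      Finset.sum_le_sum fun i _ => mul_le_mul_of_nonneg_left (hk i) (hθ k i)
    have e1 : ∑ i, θ k i * ((∑ j, A k j i * x j) + (mv k : ℝ) * x jstar * (a0 k i - b0 k i))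
        = (∑ j, (∑ i, θ k i * A k j i) * x j) +
          ((mv k : ℝ) * (∑ i, θ k i * (a0 k i - b0 k i))) * x jstar := by
      simp_rw [mul_add]
      rw [Finset.sum_add_distrib]
      congr 1
      · simp_rw [Finset.mul_sum, Finset.sum_mul, mul_assoc]
        exact Finset.sum_comm
      · rw [Finset.mul_sum, Finset.sum_mul]
        exact Finset.sum_congr rfl fun i _ => by ring
    linarith [e1 ▸ h1]
  have hsplit : (∑ j ∈ Finset.univ.erase jstar, (∑ i, θ k i * A k j i) * x j)
      + (∑ i, θ k i * A k jstar i) * x jstar = ∑ j, (∑ i, θ k i * A k j i) * x j :=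
    Finset.sum_erase_add _ _ (Finset.mem_univ _)
  have step : 1 ≤ (∑ j ∈ Finset.univ.erase jstar,
        ((∑ i, θ k i * A k j i) / (∑ i, θ k i * a0 k i)) * x j)
      + (((∑ i, θ k i * A k jstar i) + (mv k : ℝ) * (∑ i, θ k i * (a0 k i - b0 k i))) /
          (∑ i, θ k i * a0 k i)) * x jstar := by
    simp_rw [div_mul_eq_mul_div, ← Finset.sum_div, ← add_div]
    rw [le_div_iff₀ hDk, one_mul, add_mul]
    linarith
  refine le_trans step (add_le_add ?_ ?_)
  · refine Finset.sum_le_sum fun j _ => mul_le_mul_of_nonneg_right ?_ (hxnn x hx j)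
    exact Finset.le_sup' (fun k => (∑ i, θ k i * A k j i) / (∑ i, θ k i * a0 k i))
      (Finset.mem_univ k)
  · exact mul_le_mul_of_nonneg_right
      (Finset.le_sup' (fun k => ((∑ i, θ k i * A k jstar i) +
        (mv k : ℝ) * (∑ i, θ k i * (a0 k i - b0 k i))) / (∑ i, θ k i * a0 k i))
        (Finset.mem_univ k)) hp0
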